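/- Let A be a commutative ℚ-algebra with derivation d, let N ≥ 1, and let z, z̄ ∈ A[w,w⁻¹] have supports contained in {−N, …, 1} and {−1, 0, …, N} respectively, satisfying the string equation {z, z̄} = 1. For 1 ≤ k ≤ N+1 set H̄_k := (z̄^k)₋ + (1/2)·(z̄^k)₀. Then {H̄_k, z} has support contained in {−N, …, 1}; i.e., assuming the string equation, the t̄_k-flows with 1 ≤ k ≤ N+1 preserve the polynomial reduction of z. -/

import Mathlib

open LaurentPolynomial

/-- The derivation `d : A → A` extended coefficientwise to Laurent polynomials
(so that `d w = 0`). -/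
noncomputable def dmap {A : Type*} [CommRing A] (d : A → A) (f : LaurentPolynomial A) :
    LaurentPolynomial A :=
  f.coeff.sum fun n a => C (d a) * T n

/-- The formal derivative `∂_w` on Laurent polynomials. -/
noncomputable def wderiv {A : Type*} [CommRing A] (f : LaurentPolynomial A) :
    LaurentPolynomial A :=
  f.coeff.sum fun n a => C (n • a) * T (n - 1)

/-- The Lax–Poisson bracket `{f,g} = w·(∂_w f)·(d g) − w·(d f)·(∂_w g)`. -/
noncomputable def lax {A : Type*} [CommRing A] (d : A → A) (f g : LaurentPolynomial A) :
    LaurentPolynomial A :=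
  T 1 * wderiv f * dmap d g - T 1 * dmap d f * wderiv g

/-- `f₊`, the strictly positive-degree part of a Laurent polynomial. -/
noncomputable def posPart {A : Type*} [CommRing A] (f : LaurentPolynomial A) :
    LaurentPolynomial A :=
  f.coeff.sum fun n a => if 0 < n then C a * T n else 0

/-- `f₋`, the strictly negative-degree part of a Laurent polynomial. -/
noncomputable def negPart {A : Type*} [CommRing A] (f : LaurentPolynomial A) :
    LaurentPolynomial A :=
  f.coeff.sum fun n a => if n < 0 then C a * T n else 0

section Aux

variable {A : Type*} [CommRing A]

lemma d_zero (d : A → A) (hd_add : ∀ a b : A, d (a + b) = d a + d b) : d 0 = 0 := by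
  have h := hd_add 0 0
  rw [add_zero] at h
  exact left_eq_add.mp h

lemma d_one (d : A → A) (hd_mul : ∀ a b : A, d (a * b) = a * d b + d a * b) : d 1 = 0 := by
  have h := hd_mul 1 1
  rw [mul_one, one_mul, mul_one] at h
  exact left_eq_add.mp h

lemma C_mul_T_mul_C_mul_T (x y : A) (i j : ℤ) :
    (C x * T i) * (C y * T j) = C (x * y) * T (i + j) := by
  rw [mul_mul_mul_comm, ← map_mul, ← T_add]

lemma wderiv_add (f g : LaurentPolynomial A) :
    wderiv (f + g) = wderiv f + wderiv g := by
  classical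
  simp only [wderiv, AddMonoidAlgebra.coeff_add]
  refine Finsupp.sum_add_index' (fun n => ?_) (fun n a b => ?_)
  · simp
  · rw [smul_add, map_add, add_mul]

lemma wderiv_C_mul_T (a : A) (n : ℤ) :
    wderiv (C a * T n) = C (n • a) * T (n - 1) := by
  classical
  rw [← single_eq_C_mul_T]
  simp only [wderiv, AddMonoidAlgebra.coeff_single]
  rw [Finsupp.sum_single_index]
  simp

lemma dmap_add (d : A → A) (hd_add : ∀ a b : A, d (a + b) = d a + d b)
    (f g : LaurentPolynomial A) :
    dmap d (f + g) = dmap d f + dmap d g := by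
  classical
  simp only [dmap, AddMonoidAlgebra.coeff_add]
  refine Finsupp.sum_add_index' (fun n => ?_) (fun n a b => ?_)
  · rw [d_zero d hd_add]; simp
  · rw [hd_add, map_add, add_mul]

lemma dmap_C_mul_T (d : A → A) (hd_add : ∀ a b : A, d (a + b) = d a + d b)
    (a : A) (n : ℤ) :
    dmap d (C a * T n) = C (d a) * T n := by
  classical
  rw [← single_eq_C_mul_T]
  simp only [dmap, AddMonoidAlgebra.coeff_single]
  rw [Finsupp.sum_single_index]
  rw [d_zero d hd_add]; simp

lemma wderiv_sub (f g : LaurentPolynomial A) :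
    wderiv (f - g) = wderiv f - wderiv g := by
  have h := wderiv_add (f - g) g
  rw [sub_add_cancel] at h
  exact eq_sub_of_add_eq h.symm

lemma dmap_sub (d : A → A) (hd_add : ∀ a b : A, d (a + b) = d a + d b)
    (f g : LaurentPolynomial A) :
    dmap d (f - g) = dmap d f - dmap d g := by
  have h := dmap_add d hd_add (f - g) g
  rw [sub_add_cancel] at h
  exact eq_sub_of_add_eq h.symm

lemma wderiv_mul (f g : LaurentPolynomial A) :
    wderiv (f * g) = f * wderiv g + wderiv f * g := by
  classical
  induction f using LaurentPolynomial.induction_on' with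
  | add p q hp hq =>
      rw [add_mul, wderiv_add, hp, hq, wderiv_add]; ring
  | C_mul_T n a =>
      induction g using LaurentPolynomial.induction_on' with
      | add p q hp hq =>
          rw [mul_add, wderiv_add, hp, hq, wderiv_add]; ring
      | C_mul_T m b =>
          rw [C_mul_T_mul_C_mul_T, wderiv_C_mul_T, wderiv_C_mul_T, wderiv_C_mul_T,
            C_mul_T_mul_C_mul_T, C_mul_T_mul_C_mul_T,
            show n + (m - 1) = n + m - 1 by ring, show n - 1 + m = n + m - 1 by ring,
            ← add_mul, ← map_add]
          congr 1
          rw [add_smul, mul_smul_comm, smul_mul_assoc, add_comm]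

lemma dmap_mul (d : A → A) (hd_add : ∀ a b : A, d (a + b) = d a + d b)
    (hd_mul : ∀ a b : A, d (a * b) = a * d b + d a * b)
    (f g : LaurentPolynomial A) :
    dmap d (f * g) = f * dmap d g + dmap d f * g := by
  classical
  induction f using LaurentPolynomial.induction_on' with
  | add p q hp hq =>
      rw [add_mul, dmap_add d hd_add, hp, hq, dmap_add d hd_add]; ring
  | C_mul_T n a =>
      induction g using LaurentPolynomial.induction_on' with
      | add p q hp hq =>
          rw [mul_add, dmap_add d hd_add, hp, hq, dmap_add d hd_add]; ring
      | C_mul_T m b =>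
          rw [C_mul_T_mul_C_mul_T, dmap_C_mul_T d hd_add, dmap_C_mul_T d hd_add,
            dmap_C_mul_T d hd_add, C_mul_T_mul_C_mul_T, C_mul_T_mul_C_mul_T,
            ← add_mul, ← map_add, hd_mul]

lemma lax_antisymm (d : A → A) (f g : LaurentPolynomial A) :
    lax d f g = - lax d g f := by
  simp only [lax]; ring

lemma lax_sub_left (d : A → A) (hd_add : ∀ a b : A, d (a + b) = d a + d b)
    (f g h : LaurentPolynomial A) :
    lax d (f - g) h = lax d f h - lax d g h := by
  simp only [lax, wderiv_sub, dmap_sub d hd_add]; ring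

lemma lax_mul_left (d : A → A) (hd_add : ∀ a b : A, d (a + b) = d a + d b)
    (hd_mul : ∀ a b : A, d (a * b) = a * d b + d a * b)
    (f g h : LaurentPolynomial A) :
    lax d (f * g) h = f * lax d g h + g * lax d f h := by
  simp only [lax, wderiv_mul, dmap_mul d hd_add hd_mul]; ring

lemma lax_pow (d : A → A) (hd_add : ∀ a b : A, d (a + b) = d a + d b)
    (hd_mul : ∀ a b : A, d (a * b) = a * d b + d a * b)
    (g f : LaurentPolynomial A) (m : ℕ) :
    lax d (g ^ (m + 1)) f = ((m + 1 : ℕ) : LaurentPolynomial A) * g ^ m * lax d g f := by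
  induction m with
  | zero => simp
  | succ m ih =>
      rw [pow_succ, lax_mul_left d hd_add hd_mul, ih]
      push_cast
      ring

lemma supp_C_mul_T (a : A) (n : ℤ) :
    (C a * T n : LaurentPolynomial A).coeff.support ⊆ {n} := by
  rw [← single_eq_C_mul_T]
  exact Finsupp.support_single_subset

lemma support_one : (1 : LaurentPolynomial A).coeff.support ⊆ {0} := by
  have := supp_C_mul_T (1 : A) 0
  simpa using this

lemma support_T (n : ℤ) : (T n : LaurentPolynomial A).coeff.support ⊆ {n} := by
  have := supp_C_mul_T (1 : A) n
  simpa using this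

lemma dmap_support (d : A → A) (f : LaurentPolynomial A) :
    (dmap d f).coeff.support ⊆ f.coeff.support := by
  classical
  intro x hx
  simp only [dmap, AddMonoidAlgebra.coeff_finsuppSum] at hx
  obtain ⟨n, hn, hx⟩ := Finset.mem_biUnion.mp (Finsupp.support_sum hx)
  have := supp_C_mul_T (d (f.coeff n)) n hx
  simp only [Finset.mem_singleton] at this
  rwa [this]

lemma wderiv_support (f : LaurentPolynomial A) :
    ∀ x ∈ (wderiv f).coeff.support, x + 1 ∈ f.coeff.support := by
  classical
  intro x hx
  simp only [wderiv, AddMonoidAlgebra.coeff_finsuppSum] at hx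
  obtain ⟨n, hn, hx⟩ := Finset.mem_biUnion.mp (Finsupp.support_sum hx)
  have := supp_C_mul_T (n • f.coeff n) (n - 1) hx
  simp only [Finset.mem_singleton] at this
  rw [this, sub_add_cancel]
  exact hn

lemma posPart_support (f : LaurentPolynomial A) :
    ∀ x ∈ (posPart f).coeff.support, 0 < x := by
  classical
  intro x hx
  simp only [_root_.posPart, AddMonoidAlgebra.coeff_finsuppSum] at hx
  obtain ⟨n, hn, hx⟩ := Finset.mem_biUnion.mp (Finsupp.support_sum hx)
  by_cases h : 0 < n
  · rw [if_pos h] at hx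
    have := supp_C_mul_T (f.coeff n) n hx
    simp only [Finset.mem_singleton] at this
    rwa [this]
  · rw [if_neg h] at hx
    simp at hx

lemma negPart_support (f : LaurentPolynomial A) :
    ∀ x ∈ (negPart f).coeff.support, x < 0 := by
  classical
  intro x hx
  simp only [_root_.negPart, AddMonoidAlgebra.coeff_finsuppSum] at hx
  obtain ⟨n, hn, hx⟩ := Finset.mem_biUnion.mp (Finsupp.support_sum hx)
  by_cases h : n < 0
  · rw [if_pos h] at hx
    have := supp_C_mul_T (f.coeff n) n hx
    simp only [Finset.mem_singleton] at this
    rwa [this]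
  · rw [if_neg h] at hx
    simp at hx

lemma support_C (a : A) : (C a : LaurentPolynomial A).coeff.support ⊆ {0} := by
  have := supp_C_mul_T a 0
  simpa using this

lemma lax_support (d : A → A) (f g : LaurentPolynomial A) :
    ∀ x ∈ (lax d f g).coeff.support, ∃ i ∈ f.coeff.support, ∃ j ∈ g.coeff.support, x = i + j := by
  classical
  intro x hx
  simp only [lax, AddMonoidAlgebra.coeff_sub] at hx
  have hx' := Finsupp.support_sub hx
  rw [Finset.mem_union] at hx'
  rcases hx' with hx' | hx'
  · obtain ⟨p, hp, q, hq, hpq⟩ := Finset.mem_add.mp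
      (AddMonoidAlgebra.support_coeff_mul_subset (T 1 * wderiv f) (dmap d g) hx')
    obtain ⟨r, hr, s, hs, hrs⟩ := Finset.mem_add.mp
      (AddMonoidAlgebra.support_coeff_mul_subset (T 1) (wderiv f) hp)
    have hr1 : r = 1 := Finset.mem_singleton.mp (support_T 1 hr)
    refine ⟨s + 1, wderiv_support f s hs, q, dmap_support d g hq, ?_⟩
    omega
  · obtain ⟨p, hp, q, hq, hpq⟩ := Finset.mem_add.mp
      (AddMonoidAlgebra.support_coeff_mul_subset (T 1 * dmap d f) (wderiv g) hx')
    obtain ⟨r, hr, s, hs, hrs⟩ := Finset.mem_add.mp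
      (AddMonoidAlgebra.support_coeff_mul_subset (T 1) (dmap d f) hp)
    have hr1 : r = 1 := Finset.mem_singleton.mp (support_T 1 hr)
    refine ⟨s, dmap_support d f hs, q + 1, wderiv_support g q hq, ?_⟩
    omega

lemma pow_support_lb (f : LaurentPolynomial A)
    (hf : ∀ n ∈ f.coeff.support, -1 ≤ n) :
    ∀ m : ℕ, ∀ n ∈ (f ^ m).coeff.support, -(m : ℤ) ≤ n := by
  classical
  intro m
  induction m with
  | zero =>
      intro n hn
      rw [pow_zero] at hn
      have := Finset.mem_singleton.mp (support_one hn)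
      omega
  | succ m ih =>
      intro n hn
      rw [pow_succ] at hn
      obtain ⟨p, hp, q, hq, hpq⟩ := Finset.mem_add.mp
        (AddMonoidAlgebra.support_coeff_mul_subset (f ^ m) f hn)
      have h1 := ih p hp
      have h2 := hf q hq
      push_cast
      omega

lemma decomp (f : LaurentPolynomial A) :
    _root_.negPart f + _root_.posPart f + C (f.coeff 0) = f := by
  classical
  conv_rhs => rw [← AddMonoidAlgebra.sum_coeff_single f]
  have hsplit : f.coeff.sum AddMonoidAlgebra.single = f.coeff.sum fun n a =>
      (if n < 0 then C a * T n else 0) +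
        ((if 0 < n then C a * T n else 0) + (if n = 0 then C a * T n else 0)) := by
    refine Finsupp.sum_congr fun n _ => ?_
    rcases lt_trichotomy n 0 with h | h | h
    · rw [if_pos h, if_neg (by omega), if_neg (by omega), single_eq_C_mul_T]; abel
    · rw [if_neg (by omega), if_neg (by omega), if_pos h, single_eq_C_mul_T]; abel
    · rw [if_neg (by omega), if_pos h, if_neg (by omega), single_eq_C_mul_T]; abel
  rw [hsplit, Finsupp.sum_add, Finsupp.sum_add]
  have h3 : (f.coeff.sum fun n a => if n = 0 then C a * T n else 0) = C (f.coeff 0) := by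
    have he : (f.coeff.sum fun n a => if n = 0 then C a * T n else 0) =
        f.coeff.sum fun n a => if n = 0 then C a else 0 := by
      refine Finsupp.sum_congr fun n _ => ?_
      split_ifs with h
      · rw [h, T_zero, mul_one]
      · rfl
    rw [he, Finsupp.sum_ite_eq']
    by_cases h0 : (0 : ℤ) ∈ f.coeff.support
    · rw [if_pos h0]
    · rw [if_neg h0, Finsupp.notMem_support_iff.mp h0, map_zero]
  rw [h3]
  show _root_.negPart f + _root_.posPart f + C (f.coeff 0) = _ + (_ + C (f.coeff 0))
  rw [add_assoc]
  rfl

end Aux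

/-- assuming the string equation `{z, z̄} = 1`, the `t̄_k`-flows with
`1 ≤ k ≤ N+1` preserve the polynomial reduction of `z`: with
`H̄_k = (z̄^k)₋ + (1/2)(z̄^k)₀`, the bracket `{H̄_k, z}` has support in `{−N,…,1}`. -/
theorem tbar_flow_preserves_poly_reduction_of_z {A : Type*} [CommRing A] [Algebra ℚ A]
    (d : A → A)
    (hd_add : ∀ a b : A, d (a + b) = d a + d b)
    (hd_mul : ∀ a b : A, d (a * b) = a * d b + d a * b)
    (N k : ℕ) (hN : 1 ≤ N) (hk1 : 1 ≤ k) (hk2 : k ≤ N + 1)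
    (z zbar : LaurentPolynomial A)
    (hz : z.coeff.support ⊆ Finset.Icc (-(N : ℤ)) 1)
    (hzbar : zbar.coeff.support ⊆ Finset.Icc (-1 : ℤ) (N : ℤ))
    (hstring : lax d z zbar = 1)
    (Hbk : LaurentPolynomial A)
    (hHbk : Hbk = negPart (zbar ^ k) + C ((1/2 : ℚ) • ((zbar ^ k).coeff (0 : ℤ)))) :
    (lax d Hbk z).coeff.support ⊆ Finset.Icc (-(N : ℤ)) 1 := by
  classical
  obtain ⟨m, rfl⟩ : ∃ m, k = m + 1 := ⟨k - 1, (Nat.succ_pred_eq_of_pos hk1).symm⟩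
  set P : LaurentPolynomial A := zbar ^ (m + 1) with hP
  set Q : LaurentPolynomial A := posPart P + C ((1/2 : ℚ) • (P.coeff 0)) with hQdef
  have hhalf : (C ((1/2 : ℚ) • P.coeff 0) : LaurentPolynomial A) +
      C ((1/2 : ℚ) • P.coeff 0) = C (P.coeff 0) := by
    rw [← map_add, ← add_smul]
    norm_num
  have hdecomp : Hbk = P - Q := by
    rw [hHbk, hQdef]
    have h := decomp P
    linear_combination h + hhalf
  -- the bracket with zbar^k
  have hzz : lax d zbar z = -1 := by
    rw [lax_antisymm, hstring]
  have hPz : lax d P z = -(((m + 1 : ℕ) : LaurentPolynomial A) * zbar ^ m) := by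
    rw [hP, lax_pow d hd_add hd_mul, hzz]
    ring
  -- linearity
  have hlin : lax d Hbk z = lax d P z - lax d Q z := by
    rw [hdecomp, lax_sub_left d hd_add]
  -- support bounds for zbar and z
  have hzbar_lb : ∀ n ∈ zbar.coeff.support, -1 ≤ n := fun n hn => (Finset.mem_Icc.mp (hzbar hn)).1
  have hz_lb : ∀ n ∈ z.coeff.support, -(N : ℤ) ≤ n := fun n hn => (Finset.mem_Icc.mp (hz hn)).1
  have hz_ub : ∀ n ∈ z.coeff.support, n ≤ 1 := fun n hn => (Finset.mem_Icc.mp (hz hn)).2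
  have hpow := pow_support_lb zbar hzbar_lb m
  -- Hbk support is nonpositive
  have hHbk_ub : ∀ i ∈ Hbk.coeff.support, i ≤ 0 := by
    intro i hi
    rw [hHbk, AddMonoidAlgebra.coeff_add] at hi
    rcases Finset.mem_union.mp (Finsupp.support_add hi) with h | h
    · exact le_of_lt (negPart_support _ i h)
    · have := Finset.mem_singleton.mp (support_C _ h)
      omega
  -- Q support is nonnegative
  have hQ_lb : ∀ i ∈ Q.coeff.support, 0 ≤ i := by
    intro i hi
    rw [hQdef, AddMonoidAlgebra.coeff_add] at hi
    rcases Finset.mem_union.mp (Finsupp.support_add hi) with h | h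
    · exact le_of_lt (posPart_support _ i h)
    · have := Finset.mem_singleton.mp (support_C _ h)
      omega
  intro x hx
  rw [Finset.mem_Icc]
  constructor
  · -- lower bound
    have hx' : x ∈ (lax d P z - lax d Q z).coeff.support := by rwa [← hlin]
    rcases Finset.mem_union.mp (Finsupp.support_sub hx') with h | h
    · -- x ∈ support of -( (m+1) * zbar^m )
      rw [hPz] at h
      rw [show AddMonoidAlgebra.coeffEquiv.toFun (-(((m + 1 : ℕ) : LaurentPolynomial A) * zbar ^ m)) =
          -(((m + 1 : ℕ) : LaurentPolynomial A) * zbar ^ m).coeff from rfl, Finsupp.support_neg] at h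
      have hcast : ((m + 1 : ℕ) : LaurentPolynomial A) = C ((m + 1 : ℕ) : A) := by
        rw [map_natCast]
      rw [hcast] at h
      obtain ⟨p, hp, q, hq, hpq⟩ := Finset.mem_add.mp
        (AddMonoidAlgebra.support_coeff_mul_subset _ (zbar ^ m) h)
      have hp0 := Finset.mem_singleton.mp (support_C _ hp)
      have hq' := hpow q hq
      have hmN : m ≤ N := by omega
      have hmN' : (m : ℤ) ≤ (N : ℤ) := by exact_mod_cast hmN
      omega
    · obtain ⟨i, hi, j, hj, hij⟩ := lax_support d Q z x h
      have := hQ_lb i hi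
      have := hz_lb j hj
      omega
  · -- upper bound
    obtain ⟨i, hi, j, hj, hij⟩ := lax_support d Hbk z x hx
    have := hHbk_ub i hi
    have := hz_ub j hj
    omega
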